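/- In the m×n grid graph with m,n odd, if row i contains (n+1)/2 elements of an independent set S', then these elements occupy exactly the odd columns {(i,1),(i,3),…,(i,n)}, and consequently row i+1 (if it exists) contains at most (n−1)/2 elements of S'. -/

import Mathlib

/-- Adjacency in the grid graph: Manhattan distance 1. -/
def gridAdj (p q : ℕ × ℕ) : Prop := Nat.dist p.1 q.1 + Nat.dist p.2 q.2 = 1

/-- Vertex set of the m × n grid graph. -/
def gridVerts (m n : ℕ) : Finset (ℕ × ℕ) := Finset.Icc 1 m ×ˢ Finset.Icc 1 n

/-- The set S = {(s,t) : s ≡ t (mod 2)}. -/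
def misSet (m n : ℕ) : Finset (ℕ × ℕ) :=
  (gridVerts m n).filter (fun p => p.1 % 2 = p.2 % 2)

/-- I is an independent set of the m × n grid graph. -/
def IsIndep (m n : ℕ) (I : Finset (ℕ × ℕ)) : Prop :=
  I ⊆ gridVerts m n ∧ ∀ p ∈ I, ∀ q ∈ I, ¬ gridAdj p q


lemma noTwoConsec_bound (N : ℕ) (T : Finset ℕ) (hT : T ⊆ Finset.Icc 1 N)
    (hcons : ∀ a ∈ T, ∀ b ∈ T, a + 1 ≠ b) : T.card ≤ (N + 1) / 2 := by
  have : T.card ≤ (Finset.Icc 1 ((N+1)/2)).card := by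
    apply Finset.card_le_card_of_injOn (fun t => (t + 1) / 2)
    · intro t ht
      have := hT ht
      simp only [Finset.mem_coe, Finset.mem_Icc] at this ⊢
      omega
    · intro a ha b hb hab
      have h1 := hcons a ha b hb
      have h2 := hcons b hb a ha
      simp only at hab
      omega
  simpa using this

lemma oddsEq (k : ℕ) : ∀ T : Finset ℕ, T ⊆ Finset.Icc 1 (2*k+1) →
    (∀ a ∈ T, ∀ b ∈ T, a + 1 ≠ b) → T.card = k + 1 →
    T = (Finset.Icc 1 (2*k+1)).filter (fun t => t % 2 = 1) := by
  induction k with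
  | zero =>
    intro T hT hcons hcard
    have h1 : Finset.Icc 1 (2*0+1) = {1} := by decide
    rw [h1] at hT ⊢
    have := Finset.eq_of_subset_of_card_le hT (by simp [hcard])
    rw [this]
    decide
  | succ k ih =>
    intro T hT hcons hcard
    set T' := T.filter (fun t => t ≤ 2*k+1) with hT'def
    have hT'sub : T' ⊆ T := Finset.filter_subset _ _
    have hT'icc : T' ⊆ Finset.Icc 1 (2*k+1) := by
      intro t ht
      simp only [hT'def, Finset.mem_filter] at ht
      have := hT ht.1
      simp only [Finset.mem_Icc] at this ⊢
      omega
    have hcons' : ∀ a ∈ T', ∀ b ∈ T', a + 1 ≠ b := fun a ha b hb =>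
      hcons a (hT'sub ha) b (hT'sub hb)
    have hsd : (T \ T').card ≤ 1 := by
      rw [Finset.card_le_one]
      intro a ha b hb
      simp only [Finset.mem_sdiff, hT'def, Finset.mem_filter] at ha hb
      have ha2 := hT ha.1
      have hb2 := hT hb.1
      simp only [Finset.mem_Icc] at ha2 hb2
      have h1 := hcons a ha.1 b hb.1
      have h2 := hcons b hb.1 a ha.1
      have ha3 : ¬ a ≤ 2*k+1 := fun h => ha.2 ⟨ha.1, h⟩
      have hb3 : ¬ b ≤ 2*k+1 := fun h => hb.2 ⟨hb.1, h⟩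
      omega
    have hub : T'.card ≤ k + 1 := by
      have := noTwoConsec_bound (2*k+1) T' hT'icc hcons'
      omega
    have hcd : (T \ T').card = T.card - T'.card := Finset.card_sdiff_of_subset hT'sub
    have hT'card : T'.card = k + 1 := by omega
    have hodds := ih T' hT'icc hcons' hT'card
    have htop : 2*k+1 ∈ T := by
      apply hT'sub
      rw [hodds]
      simp only [Finset.mem_filter, Finset.mem_Icc]
      omega
    have hsd1 : (T \ T').card = 1 := by omega
    obtain ⟨x, hx⟩ := Finset.card_eq_one.mp hsd1
    have hxmem : x ∈ T \ T' := by rw [hx]; exact Finset.mem_singleton_self x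
    simp only [Finset.mem_sdiff, hT'def, Finset.mem_filter] at hxmem
    have hxbd := hT hxmem.1
    simp only [Finset.mem_Icc] at hxbd
    have hne : (2*k+1) + 1 ≠ x := hcons _ htop _ hxmem.1
    have hx3 : ¬ x ≤ 2*k+1 := fun h => hxmem.2 ⟨hxmem.1, h⟩
    have hxval : x = 2*k+3 := by omega
    have hTeq : T = insert (2*k+3) T' := by
      ext t
      simp only [Finset.mem_insert, hT'def, Finset.mem_filter]
      constructor
      · intro ht
        by_cases h : t ≤ 2*k+1
        · exact Or.inr ⟨ht, h⟩
        · left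
          have : t ∈ T \ T' := by
            simp only [Finset.mem_sdiff, hT'def, Finset.mem_filter]
            exact ⟨ht, fun h' => h h'.2⟩
          rw [hx, hxval] at this
          simpa using this
      · rintro (rfl | ⟨ht, _⟩)
        · rw [← hxval]; exact hxmem.1
        · exact ht
    rw [hTeq, hodds]
    ext t
    simp only [Finset.mem_insert, Finset.mem_filter, Finset.mem_Icc]
    omega

lemma parityCard (n : ℕ) : ((Finset.Icc 1 n).filter (fun t => t % 2 = 1)).card = (n+1)/2
    ∧ ((Finset.Icc 1 n).filter (fun t => t % 2 = 0)).card = n/2 := by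
  induction n with
  | zero => decide
  | succ n ih =>
    have h1 : Finset.Icc 1 (n+1) = insert (n+1) (Finset.Icc 1 n) := by
      ext t
      simp only [Finset.mem_Icc, Finset.mem_insert]
      omega
    have h2 : (n+1) ∉ Finset.Icc 1 n := by simp
    rcases Nat.mod_two_eq_zero_or_one (n+1) with hp | hp
    · constructor
      · rw [h1, Finset.filter_insert, if_neg (by omega), ih.1]; omega
      · rw [h1, Finset.filter_insert, if_pos hp, Finset.card_insert_of_notMem (by simp), ih.2]
        omega
    · constructor
      · rw [h1, Finset.filter_insert, if_pos hp, Finset.card_insert_of_notMem (by simp), ih.1]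
        omega
      · rw [h1, Finset.filter_insert, if_neg (by omega), ih.2]; omega

theorem stmt18 (m n : ℕ) (hm : m % 2 = 1) (hn : n % 2 = 1)
    (S' : Finset (ℕ × ℕ)) (hI : IsIndep m n S')
    (i : ℕ) (hi : 1 ≤ i) (him : i ≤ m)
    (hrow : (S'.filter (fun p => p.1 = i)).card = (n + 1) / 2) :
    S'.filter (fun p => p.1 = i) =
      ((Finset.Icc 1 n).filter (fun t => t % 2 = 1)).image (fun t => (i, t)) ∧
    (i + 1 ≤ m → (S'.filter (fun p => p.1 = i + 1)).card ≤ (n - 1) / 2) := by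
  obtain ⟨hsub, hind⟩ := hI
  -- columns of row i
  set C := (S'.filter (fun p => p.1 = i)).image Prod.snd with hCdef
  have hmemC : ∀ t, t ∈ C ↔ (i, t) ∈ S' := by
    intro t
    simp only [hCdef, Finset.mem_image, Finset.mem_filter]
    constructor
    · rintro ⟨⟨a, b⟩, ⟨hq, rfl⟩, rfl⟩; exact hq
    · intro h; exact ⟨(i, t), ⟨h, rfl⟩, rfl⟩
  have hCcard : C.card = (n + 1) / 2 := by
    rw [hCdef, Finset.card_image_of_injOn, hrow]
    intro p hp q hq hpq
    simp only [Finset.mem_coe, Finset.mem_filter] at hp hq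
    exact Prod.ext (hp.2.trans hq.2.symm) hpq
  have hCicc : C ⊆ Finset.Icc 1 n := by
    intro t ht
    have := hsub ((hmemC t).mp ht)
    simp only [gridVerts, Finset.mem_product] at this
    exact this.2
  have hCcons : ∀ a ∈ C, ∀ b ∈ C, a + 1 ≠ b := by
    intro a ha b hb hab
    apply hind (i, a) ((hmemC a).mp ha) (i, b) ((hmemC b).mp hb)
    simp only [gridAdj, Nat.dist_self, Nat.dist, ← hab]
    omega
  obtain ⟨k, hk⟩ : ∃ k, n = 2 * k + 1 := ⟨n / 2, by omega⟩
  have hCodds : C = (Finset.Icc 1 n).filter (fun t => t % 2 = 1) := by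
    rw [hk]
    exact oddsEq k C (hk ▸ hCicc) hCcons (by omega)
  constructor
  · ext p
    obtain ⟨a, b⟩ := p
    simp only [Finset.mem_filter, Finset.mem_image, Prod.mk.injEq]
    constructor
    · rintro ⟨hp, rfl⟩
      refine ⟨b, ?_, rfl, rfl⟩
      have hb : b ∈ C := (hmemC b).mpr hp
      rw [hCodds] at hb
      simpa using hb
    · rintro ⟨t, ht, rfl, rfl⟩
      have htc : t ∈ C := by
        rw [hCodds]
        simp only [Finset.mem_filter]
        exact ht
      exact ⟨(hmemC t).mp htc, rfl⟩
  · intro him1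
    set D := (S'.filter (fun p => p.1 = i + 1)).image Prod.snd with hDdef
    have hmemD : ∀ t, t ∈ D ↔ (i + 1, t) ∈ S' := by
      intro t
      simp only [hDdef, Finset.mem_image, Finset.mem_filter]
      constructor
      · rintro ⟨⟨a, b⟩, ⟨hq, rfl⟩, rfl⟩; exact hq
      · intro h; exact ⟨(i + 1, t), ⟨h, rfl⟩, rfl⟩
    have hDcard : (S'.filter (fun p => p.1 = i + 1)).card = D.card := by
      rw [hDdef, Finset.card_image_of_injOn]
      intro p hp q hq hpq
      simp only [Finset.mem_coe, Finset.mem_filter] at hp hq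
      exact Prod.ext (hp.2.trans hq.2.symm) hpq
    have hDsub : D ⊆ (Finset.Icc 1 n).filter (fun t => t % 2 = 0) := by
      intro t ht
      have hts := (hmemD t).mp ht
      have hv := hsub hts
      simp only [gridVerts, Finset.mem_product] at hv
      simp only [Finset.mem_filter]
      refine ⟨hv.2, ?_⟩
      by_contra hodd
      have htodd : t ∈ C := by
        rw [hCodds]
        simp only [Finset.mem_filter]
        exact ⟨hv.2, by omega⟩
      apply hind (i, t) ((hmemC t).mp htodd) (i + 1, t) hts
      simp only [gridAdj, Nat.dist_self, Nat.dist]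
      omega
    have := Finset.card_le_card hDsub
    have hev := (parityCard n).2
    omega
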